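/- The operator T on E = C[0,1] ⊕ L¹[0,1] defined by T(φ, ψ) = (0, φ) is positive and quasi-c-σ-Levi, but not σ-Levi: there is a norm-bounded increasing sequence (f_n) in E_+ such that (Tf_n) order-converges to an element not in the range of T restricted to {Tx : x ∈ E}. -/

import Mathlib

open MeasureTheory

/-- `p ↓ 0` : `p` is decreasing with infimum `0`. -/
def DownToZero {F : Type*} [Lattice F] [AddCommGroup F] (p : ℕ → F) : Prop :=
  Antitone p ∧ IsGLB (Set.range p) 0

/-- order convergence of a sequence to a point. -/
def OrderConvTo {F : Type*} [Lattice F] [AddCommGroup F] (y : ℕ → F) (l : F) : Prop :=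
  ∃ p : ℕ → F, DownToZero p ∧ ∀ n, |y n - l| ≤ p n

/-- The space `E = C[0,1] ⊕ L¹[0,1]` with componentwise order. -/
noncomputable abbrev Espace : Type :=
  C(Set.Icc (0:ℝ) 1, ℝ) × Lp ℝ 1 (volume : Measure (Set.Icc (0:ℝ) 1))

/-- Inclusion of `C[0,1]` into `L¹[0,1]`. -/
noncomputable def Jincl : C(Set.Icc (0:ℝ) 1, ℝ) →L[ℝ]
    Lp ℝ 1 (volume : Measure (Set.Icc (0:ℝ) 1)) :=
  ContinuousMap.toLp 1 volume ℝ

/-- `T` is σ-Levi. -/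
def SigmaLevi (T : Espace →ₗ[ℝ] Espace) : Prop :=
  ∀ x : ℕ → Espace, Monotone x → (∀ n, 0 ≤ x n) → (∃ M : ℝ, ∀ n, ‖x n‖ ≤ M) →
    ∃ z : Espace, OrderConvTo (fun n => T (x n)) (T z)

/-- `T` is quasi-c-σ-Levi. -/
def QuasiCSigmaLevi (T : Espace →ₗ[ℝ] Espace) : Prop :=
  ∀ x : ℕ → Espace, Monotone x → (∀ n, 0 ≤ x n) → (∃ M : ℝ, ∀ n, ‖x n‖ ≤ M) →
    ∃ y : Espace, OrderConvTo (fun n => T (x n)) y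

namespace QCLeviAux

open Filter Topology

/-! ### Auxiliary lemmas -/

lemma Jincl_coeFn (f : C(Set.Icc (0:ℝ) 1, ℝ)) : ⇑(Jincl f) =ᵐ[volume] ⇑f :=
  ContinuousMap.coeFn_toLp (𝕜 := ℝ) volume f

lemma Jincl_mono {f g : C(Set.Icc (0:ℝ) 1, ℝ)} (h : f ≤ g) : Jincl f ≤ Jincl g := by
  rw [← Lp.coeFn_le]
  filter_upwards [Jincl_coeFn f, Jincl_coeFn g] with t h1 h2
  rw [h1, h2]
  exact ContinuousMap.le_def.1 h t

/-- uniqueness of order limits in a lattice-ordered abelian group -/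
lemma orderConvTo_unique {F : Type*} [Lattice F] [AddCommGroup F]
    [CovariantClass F F (· + ·) (· ≤ ·)]
    {y : ℕ → F} {l l' : F} (h : OrderConvTo y l) (h' : OrderConvTo y l') : l = l' := by
  obtain ⟨p, ⟨hpa, hpg⟩, hp⟩ := h
  obtain ⟨q, ⟨hqa, hqg⟩, hq⟩ := h'
  have key : ∀ n m, |l - l'| ≤ p n + q m := by
    intro n m
    set k := max n m with hk
    calc |l - l'| = |(l - y k) + (y k - l')| := congrArg _ (sub_add_sub_cancel l (y k) l').symm
      _ ≤ |l - y k| + |y k - l'| := abs_add_le _ _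
      _ = |y k - l| + |y k - l'| := by rw [abs_sub_comm]
      _ ≤ p k + q k := add_le_add (hp k) (hq k)
      _ ≤ p n + q m := add_le_add (hpa (le_max_left n m)) (hqa (le_max_right n m))
  have h1 : ∀ n, |l - l'| ≤ p n := by
    intro n
    have hmem : |l - l'| - p n ∈ lowerBounds (Set.range q) := by
      rintro _ ⟨m, rfl⟩
      exact sub_le_iff_le_add'.2 (key n m)
    have := hqg.2 hmem
    exact sub_nonpos.1 this
  have h2 : |l - l'| ≤ 0 := hpg.2 (by rintro _ ⟨n, rfl⟩; exact h1 n)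
  have ha : l - l' ≤ 0 := (le_abs_self _).trans h2
  have hb : -(l - l') ≤ 0 := (neg_le_abs _).trans h2
  exact sub_eq_zero.1 (le_antisymm ha (neg_nonpos.1 hb))

/-- the key order-convergence construction. -/
lemma orderConv_aux (φ : ℕ → C(Set.Icc (0:ℝ) 1, ℝ)) (h : Set.Icc (0:ℝ) 1 → ℝ)
    (hmem : MemLp h 1 volume)
    (hφmono : Monotone φ)
    (hle : ∀ n t, φ n t ≤ h t)
    (htend : ∀ t, Tendsto (fun n => φ n t) atTop (𝓝 (h t))) :
    OrderConvTo (fun n => ((0, Jincl (φ n)) : Espace)) ((0, hmem.toLp h) : Espace) := by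
  set ψ := hmem.toLp h with hψ
  have hcoe : ∀ n, ⇑(ψ - Jincl (φ n)) =ᵐ[volume] fun t => h t - φ n t := by
    intro n
    filter_upwards [Lp.coeFn_sub ψ (Jincl (φ n)), hmem.coeFn_toLp, Jincl_coeFn (φ n)]
      with t h1 h2 h3
    simp only [h1, Pi.sub_apply, h3]
    exact congrArg (· - φ n t) h2
  have hq0 : ∀ n, 0 ≤ ψ - Jincl (φ n) := by
    intro n
    rw [← Lp.coeFn_nonneg]
    filter_upwards [hcoe n] with t h1
    rw [h1]
    exact sub_nonneg.2 (hle n t)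
  refine ⟨fun n => ((0, ψ - Jincl (φ n)) : Espace), ⟨?_, ?_⟩, ?_⟩
  · intro n m hnm
    exact Prod.mk_le_mk.2 ⟨le_rfl, sub_le_sub_left (Jincl_mono (hφmono hnm)) ψ⟩
  · constructor
    · rintro _ ⟨n, rfl⟩
      exact Prod.le_def.2 ⟨le_rfl, hq0 n⟩
    · rintro b hb
      have hb2 : b.2 ≤ 0 := by
        rw [← Lp.coeFn_le]
        have hble : ∀ n, ⇑b.2 ≤ᵐ[volume] ⇑(ψ - Jincl (φ n)) := fun n =>
          (Lp.coeFn_le _ _).2 (Prod.le_def.1 (hb ⟨n, rfl⟩)).2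
        filter_upwards [ae_all_iff.2 hble, ae_all_iff.2 hcoe,
          Lp.coeFn_zero ℝ 1 (volume : Measure (Set.Icc (0:ℝ) 1))] with t h1 h2 h3
        rw [h3]
        have htd : Tendsto (fun n => h t - φ n t) atTop (𝓝 0) := by
          simpa using Tendsto.const_sub (h t) (htend t)
        refine ge_of_tendsto' htd fun n => ?_
        calc b.2 t ≤ (ψ - Jincl (φ n)) t := h1 n
          _ = h t - φ n t := h2 n
      have hb1 : b.1 ≤ 0 := (Prod.le_def.1 (hb ⟨0, rfl⟩)).1
      exact Prod.le_def.2 ⟨hb1, hb2⟩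
  · intro n
    have hJle : Jincl (φ n) ≤ ψ := sub_nonneg.1 (hq0 n)
    refine abs_le'.2 ⟨?_, ?_⟩
    · refine Prod.le_def.2 ⟨by simp, ?_⟩
      simp only [Prod.snd_sub]
      exact (sub_nonpos.2 hJle).trans (sub_nonneg.2 hJle)
    · refine Prod.le_def.2 ⟨by simp, ?_⟩
      simp only [Prod.snd_neg, Prod.snd_sub, neg_sub]
      exact le_rfl

/-- positivity of nonempty open intervals inside the unit interval. -/
lemma volume_Ioo_ne_zero {a b : ℝ} (h0 : 0 ≤ a) (hab : a < b) (hb1 : b ≤ 1) :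
    (volume : Measure (Set.Icc (0:ℝ) 1)) {t | (t : ℝ) ∈ Set.Ioo a b} ≠ 0 := by
  have hemb : MeasurableEmbedding ((↑) : Set.Icc (0:ℝ) 1 → ℝ) :=
    MeasurableEmbedding.subtype_coe measurableSet_Icc
  have hvol : (volume : Measure (Set.Icc (0:ℝ) 1)) = Measure.comap Subtype.val volume := rfl
  rw [hvol, hemb.comap_apply]
  have himg : (Subtype.val '' {t : Set.Icc (0:ℝ) 1 | (t : ℝ) ∈ Set.Ioo a b}) = Set.Ioo a b := by
    have hsub : Set.Ioo a b ⊆ Set.Icc (0:ℝ) 1 :=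
      Set.Ioo_subset_Icc_self.trans (Set.Icc_subset_Icc h0 hb1)
    ext x
    constructor
    · rintro ⟨t, ht, rfl⟩; exact ht
    · intro hx; exact ⟨⟨x, hsub hx⟩, hx, rfl⟩
  rw [himg, Real.volume_Ioo]
  simp only [ne_eq, ENNReal.ofReal_eq_zero, not_le]
  linarith

/-- the indicator function of `[0, 1/2)`. -/
noncomputable def hfun (t : Set.Icc (0:ℝ) 1) : ℝ := if (t : ℝ) < 1/2 then 1 else 0

lemma hfun_memℒp : MemLp hfun 1 (volume : Measure (Set.Icc (0:ℝ) 1)) := by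
  have hmeas : Measurable hfun := by
    have hs : MeasurableSet {t : Set.Icc (0:ℝ) 1 | (t : ℝ) < 1/2} :=
      measurable_subtype_coe measurableSet_Iio
    exact Measurable.ite hs measurable_const measurable_const
  refine MemLp.of_bound hmeas.aestronglyMeasurable 1 (ae_of_all _ fun t => ?_)
  unfold hfun
  split <;> simp

/-- no continuous function is a.e. equal to `hfun`. -/
lemma hfun_not_ae_continuous (c : C(Set.Icc (0:ℝ) 1, ℝ))
    (hc : ⇑c =ᵐ[volume] hfun) : False := by
  have hN : (volume : Measure (Set.Icc (0:ℝ) 1)) {t | ¬ c t = hfun t} = 0 := ae_iff.1 hc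
  have claim1 : ∀ x : Set.Icc (0:ℝ) 1, 0 < (x : ℝ) → (x : ℝ) ≤ 1/2 → c x = 1 := by
    intro x hx0 hx
    by_contra hne
    have hcont := (map_continuous c).continuousAt (x := x)
    rw [Metric.continuousAt_iff] at hcont
    obtain ⟨δ, hδ, hδ'⟩ := hcont (dist 1 (c x)) (dist_pos.2 fun hh => hne hh.symm)
    set m := min δ (x : ℝ) with hm
    have hmpos : 0 < m := lt_min hδ hx0
    have hsubset : {t : Set.Icc (0:ℝ) 1 | (t : ℝ) ∈ Set.Ioo ((x : ℝ) - m) (x : ℝ)} ⊆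
        {t | ¬ c t = hfun t} := by
      rintro t ⟨ht1, ht2⟩
      have hthalf : (t : ℝ) < 1/2 := lt_of_lt_of_le ht2 hx
      have hft : hfun t = 1 := if_pos hthalf
      have hdist : dist t x < δ := by
        rw [Subtype.dist_eq, Real.dist_eq, abs_of_nonpos (by linarith)]
        have : m ≤ δ := min_le_left _ _
        linarith
      intro heq
      have h1 : c t = 1 := heq.trans hft
      have := hδ' hdist
      rw [h1] at this
      exact lt_irrefl _ this
    exact volume_Ioo_ne_zero (by simp only [hm, sub_nonneg]; exact min_le_right _ _)
      (by linarith) (by linarith) (measure_mono_null hsubset hN)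
  have claim2 : ∀ x : Set.Icc (0:ℝ) 1, 1/2 ≤ (x : ℝ) → (x : ℝ) < 1 → c x = 0 := by
    intro x hx hx1
    by_contra hne
    have hcont := (map_continuous c).continuousAt (x := x)
    rw [Metric.continuousAt_iff] at hcont
    obtain ⟨δ, hδ, hδ'⟩ := hcont (dist 0 (c x)) (dist_pos.2 fun hh => hne hh.symm)
    set m := min δ (1 - (x : ℝ)) with hm
    have hmpos : 0 < m := lt_min hδ (by linarith)
    have hsubset : {t : Set.Icc (0:ℝ) 1 | (t : ℝ) ∈ Set.Ioo (x : ℝ) ((x : ℝ) + m)} ⊆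
        {t | ¬ c t = hfun t} := by
      rintro t ⟨ht1, ht2⟩
      have hthalf : ¬ (t : ℝ) < 1/2 := not_lt.2 (le_trans hx ht1.le)
      have hft : hfun t = 0 := if_neg hthalf
      have hdist : dist t x < δ := by
        rw [Subtype.dist_eq, Real.dist_eq, abs_of_nonneg (by linarith)]
        have : m ≤ δ := min_le_left _ _
        linarith
      intro heq
      have h1 : c t = 0 := heq.trans hft
      have := hδ' hdist
      rw [h1] at this
      exact lt_irrefl _ this
    refine volume_Ioo_ne_zero (by linarith) (by linarith) ?_
      (measure_mono_null hsubset hN)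
    have : m ≤ 1 - (x : ℝ) := min_le_right _ _
    linarith
  have hhalf : ((1:ℝ)/2) ∈ Set.Icc (0:ℝ) 1 := by norm_num
  have e1 : c ⟨1/2, hhalf⟩ = 1 := claim1 ⟨1/2, hhalf⟩ (by norm_num) (by norm_num)
  have e2 : c ⟨1/2, hhalf⟩ = 0 := claim2 ⟨1/2, hhalf⟩ (by norm_num) (by norm_num)
  rw [e1] at e2
  exact one_ne_zero e2

/-! ### The witness sequence -/

noncomputable def phiC (n : ℕ) : C(Set.Icc (0:ℝ) 1, ℝ) :=
  ⟨fun t => min 1 (max 0 ((1/2 - (t : ℝ)) * 2 ^ n)),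
    continuous_const.min (continuous_const.max
      ((continuous_const.sub continuous_subtype_val).mul continuous_const))⟩

lemma phiC_apply (n : ℕ) (t : Set.Icc (0:ℝ) 1) :
    phiC n t = min 1 (max 0 ((1/2 - (t : ℝ)) * 2 ^ n)) := rfl

lemma phiC_nonneg (n : ℕ) (t : Set.Icc (0:ℝ) 1) : 0 ≤ phiC n t :=
  le_min zero_le_one (le_max_left _ _)

lemma phiC_le_one (n : ℕ) (t : Set.Icc (0:ℝ) 1) : phiC n t ≤ 1 := min_le_left _ _

lemma phiC_eq_zero {n : ℕ} {t : Set.Icc (0:ℝ) 1} (ht : ¬ (t : ℝ) < 1/2) : phiC n t = 0 := by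
  rw [phiC_apply]
  have h1 : (1/2 - (t : ℝ)) * 2 ^ n ≤ 0 :=
    mul_nonpos_of_nonpos_of_nonneg (by push_neg at ht; linarith) (by positivity)
  rw [max_eq_left h1, min_eq_right zero_le_one]

lemma phiC_mono (t : Set.Icc (0:ℝ) 1) : Monotone fun n => phiC n t := by
  intro n k hnk
  show phiC n t ≤ phiC k t
  by_cases ht : (t : ℝ) < 1/2
  · simp only [phiC_apply]
    refine min_le_min le_rfl (max_le_max le_rfl ?_)
    exact mul_le_mul_of_nonneg_left (pow_le_pow_right₀ one_le_two hnk) (by linarith)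
  · rw [phiC_eq_zero ht, phiC_eq_zero ht]

lemma phiC_le_hfun (n : ℕ) (t : Set.Icc (0:ℝ) 1) : phiC n t ≤ hfun t := by
  by_cases ht : (t : ℝ) < 1/2
  · rw [hfun, if_pos ht]; exact phiC_le_one n t
  · rw [hfun, if_neg ht, phiC_eq_zero ht]

lemma phiC_tendsto (t : Set.Icc (0:ℝ) 1) :
    Tendsto (fun n => phiC n t) atTop (𝓝 (hfun t)) := by
  by_cases ht : (t : ℝ) < 1/2
  · have hcpos : 0 < 1/2 - (t : ℝ) := by linarith
    have htop : Tendsto (fun n : ℕ => (1/2 - (t : ℝ)) * 2 ^ n) atTop atTop :=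
      Tendsto.const_mul_atTop hcpos (tendsto_pow_atTop_atTop_of_one_lt one_lt_two)
    have hev : ∀ᶠ n in atTop, phiC n t = 1 := by
      filter_upwards [htop.eventually_ge_atTop 1] with n hn
      rw [phiC_apply, max_eq_right (le_trans zero_le_one hn), min_eq_left hn]
    rw [hfun, if_pos ht]
    exact Tendsto.congr'
      (show (fun _ : ℕ => (1:ℝ)) =ᶠ[atTop] fun n => phiC n t from hev.mono fun n hn => hn.symm)
      tendsto_const_nhds
  · rw [hfun, if_neg ht]
    have : ∀ n, phiC n t = 0 := fun n => phiC_eq_zero ht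
    simp only [this]
    exact tendsto_const_nhds

end QCLeviAux

open QCLeviAux Filter Topology

/-- the operator `T(φ, ψ) = (0, φ)` on `E = C[0,1] ⊕ L¹[0,1]` is
positive and quasi-c-σ-Levi, but not σ-Levi: there is a norm-bounded increasing
sequence in `E₊` whose image under `T` order converges to an element outside
the range of `T`. -/
theorem example_quasi_c_Levi_not_Levi
    (T : Espace →ₗ[ℝ] Espace) (hT : ∀ v : Espace, T v = (0, Jincl v.1)) :
    (∀ v : Espace, 0 ≤ v → 0 ≤ T v) ∧
    QuasiCSigmaLevi T ∧
    ¬ SigmaLevi T ∧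
    ∃ f : ℕ → Espace, Monotone f ∧ (∀ n, 0 ≤ f n) ∧ (∃ M : ℝ, ∀ n, ‖f n‖ ≤ M) ∧
      ∃ g : Espace, OrderConvTo (fun n => T (f n)) g ∧ g ∉ Set.range T := by
  -- part 4 : the witness
  have hwitness : ∃ f : ℕ → Espace, Monotone f ∧ (∀ n, 0 ≤ f n) ∧ (∃ M : ℝ, ∀ n, ‖f n‖ ≤ M) ∧
      ∃ g : Espace, OrderConvTo (fun n => T (f n)) g ∧ g ∉ Set.range T := by
    refine ⟨fun n => ((phiC n, 0) : Espace), ?_, ?_, ?_, ?_⟩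
    · intro n k hnk
      exact Prod.le_def.2 ⟨ContinuousMap.le_def.2 fun t => phiC_mono t hnk, le_rfl⟩
    · intro n
      refine Prod.le_def.2 ⟨ContinuousMap.le_def.2 fun t => ?_, le_rfl⟩
      simpa using phiC_nonneg n t
    · refine ⟨1, fun n => ?_⟩
      rw [Prod.norm_def]
      refine max_le ((ContinuousMap.norm_le _ zero_le_one).2 fun t => ?_) (by simp)
      rw [Real.norm_eq_abs, abs_of_nonneg (phiC_nonneg n t)]
      exact phiC_le_one n t
    · refine ⟨((0, hfun_memℒp.toLp hfun) : Espace), ?_, ?_⟩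
      · have heq : (fun n => T ((phiC n, 0) : Espace)) =
            fun n => ((0, Jincl (phiC n)) : Espace) := funext fun n => hT _
        rw [heq]
        exact orderConv_aux phiC hfun hfun_memℒp
          (fun n k hnk => ContinuousMap.le_def.2 fun t => phiC_mono t hnk)
          phiC_le_hfun phiC_tendsto
      · rintro ⟨v, hv⟩
        rw [hT v] at hv
        have h2 : Jincl v.1 = hfun_memℒp.toLp hfun := congrArg Prod.snd hv
        have hae : ⇑v.1 =ᵐ[volume] hfun :=
          (Jincl_coeFn v.1).symm.trans (h2 ▸ hfun_memℒp.coeFn_toLp)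
        exact hfun_not_ae_continuous v.1 hae
  obtain ⟨f, hfm, hf0, hfb, g, hconv, hgnot⟩ := hwitness
  refine ⟨?_, ?_, ?_, f, hfm, hf0, hfb, g, hconv, hgnot⟩
  -- positivity
  · intro v hv
    rw [hT v]
    have h1 : (0 : C(Set.Icc (0:ℝ) 1, ℝ)) ≤ v.1 := (Prod.le_def.1 hv).1
    have h2 := Jincl_mono h1
    rw [map_zero] at h2
    exact Prod.le_def.2 ⟨le_rfl, h2⟩
  -- quasi-c-σ-Levi
  · rintro x hx hx0 ⟨M, hM⟩
    set φ : ℕ → C(Set.Icc (0:ℝ) 1, ℝ) := fun n => (x n).1 with hφ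
    have hφmono : Monotone φ := fun n k h => (Prod.le_def.1 (hx h)).1
    have hpm : ∀ t, Monotone fun n => φ n t := fun t n k h =>
      ContinuousMap.le_def.1 (hφmono h) t
    have hub : ∀ n t, φ n t ≤ M := by
      intro n t
      calc φ n t ≤ ‖φ n t‖ := le_abs_self _
        _ ≤ ‖φ n‖ := ContinuousMap.norm_coe_le_norm _ t
        _ ≤ ‖x n‖ := norm_fst_le (x n)
        _ ≤ M := hM n
    have hbdd : ∀ t, BddAbove (Set.range fun n => φ n t) := fun t =>
      ⟨M, by rintro _ ⟨n, rfl⟩; exact hub n t⟩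
    set h : Set.Icc (0:ℝ) 1 → ℝ := fun t => ⨆ n, φ n t with hh
    have htend : ∀ t, Tendsto (fun n => φ n t) atTop (𝓝 (h t)) := fun t =>
      tendsto_atTop_ciSup (hpm t) (hbdd t)
    have hle : ∀ n t, φ n t ≤ h t := fun n t => le_ciSup (hbdd t) n
    have h0le : ∀ t, 0 ≤ h t := by
      intro t
      refine le_trans ?_ (hle 0 t)
      have := ContinuousMap.le_def.1 (Prod.le_def.1 (hx0 0)).1 t
      simpa using this
    have hhub : ∀ t, h t ≤ M := fun t => ciSup_le fun n => hub n t
    have hmeas : Measurable h := by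
      refine measurable_of_tendsto_metrizable' atTop
        (fun n => (map_continuous (φ n)).measurable) (tendsto_pi_nhds.2 htend)
    have hmem : MemLp h 1 (volume : Measure (Set.Icc (0:ℝ) 1)) := by
      refine MemLp.of_bound hmeas.aestronglyMeasurable M (ae_of_all _ fun t => ?_)
      rw [Real.norm_eq_abs, abs_of_nonneg (h0le t)]
      exact hhub t
    refine ⟨((0, hmem.toLp h) : Espace), ?_⟩
    have heq : (fun n => T (x n)) = fun n => ((0, Jincl (φ n)) : Espace) :=
      funext fun n => hT _
    rw [heq]
    exact orderConv_aux φ h hmem hφmono hle htend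
  -- not σ-Levi
  · intro hS
    obtain ⟨z, hz⟩ := hS f hfm hf0 hfb
    exact hgnot ⟨z, orderConvTo_unique hz hconv⟩
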